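/- arXiv:2104.13289 — 2 statements merged into one kernel-verified Lean document; each statement's English description precedes it below -/
import Mathlib

section
/- Let s : ℝ^n → ℝ^C be an affine function (so each s_k has zero Hessian) and p = softmax(s). Then the Hessian of log p_i satisfies H(log p_i)(x) = −∑_{k=1}^C ∇ p_k(x) (∇ s_k(x))ᵀ, independently of i. -/
/-- Coordinate gradient of a scalar function on `ℝ^n`. -/
noncomputable def grad {n : ℕ} (f : (Fin n → ℝ) → ℝ) (x : Fin n → ℝ) : Fin n → ℝ :=
  fun i => fderiv ℝ f x (Pi.single i 1)

/-- The softmax probabilities obtained from a score function `s`. -/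
noncomputable def softmaxP {n C : ℕ} (s : (Fin n → ℝ) → Fin C → ℝ) (i : Fin C)
    (x : Fin n → ℝ) : ℝ :=
  Real.exp (s x i) / ∑ j, Real.exp (s x j)


/-- Coordinate Hessian matrix of a scalar function on `ℝ^n`. -/
noncomputable def hess {n : ℕ} (f : (Fin n → ℝ) → ℝ) (x : Fin n → ℝ) :
    Matrix (Fin n) (Fin n) ℝ :=
  fun i j => fderiv ℝ (fun y => fderiv ℝ f y (Pi.single j 1)) x (Pi.single i 1)

theorem stmt10 {n C : ℕ} (A : Matrix (Fin C) (Fin n) ℝ) (b : Fin C → ℝ)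
    (s : (Fin n → ℝ) → Fin C → ℝ) (hs : ∀ x, s x = A.mulVec x + b)
    (i : Fin C) (x : Fin n → ℝ) :
    hess (fun y => Real.log (softmaxP s i y)) x =
      -∑ k, Matrix.vecMulVec (grad (softmaxP s k) x) (grad (fun y => s y k) x) := by
  classical
  set L : Fin C → ((Fin n → ℝ) →L[ℝ] ℝ) :=
    fun k => ∑ j, A k j • (ContinuousLinearMap.proj j : ((Fin n → ℝ)) →L[ℝ] ℝ) with hLdef
  have hLapp : ∀ k (y : Fin n → ℝ), L k y = ∑ j, A k j * y j := by
    intro k y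
    simp [hLdef, ContinuousLinearMap.sum_apply]
  have hLsingle : ∀ k m, L k (Pi.single m 1) = A k m := by
    intro k m
    rw [hLapp]
    simp [Pi.single_apply, mul_ite, Finset.sum_ite_eq]
  have hsd : ∀ k (y : Fin n → ℝ), HasFDerivAt (fun y => s y k) (L k) y := by
    intro k y
    have hfun : (fun y : Fin n → ℝ => s y k) = fun y => L k y + b k := by
      funext y
      rw [hs]
      simp [hLapp, Matrix.mulVec, dotProduct]
    rw [hfun]
    exact (L k).hasFDerivAt.add_const _
  set Z : (Fin n → ℝ) → ℝ := fun y => ∑ j, Real.exp (s y j) with hZdef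
  have hZpos : ∀ y, 0 < Z y := fun y =>
    Finset.sum_pos (fun j _ => Real.exp_pos _) ⟨i, Finset.mem_univ i⟩
  have hZne : ∀ y, Z y ≠ 0 := fun y => (hZpos y).ne'
  set D : (Fin n → ℝ) → ((Fin n → ℝ) →L[ℝ] ℝ) :=
    fun y => ∑ k, Real.exp (s y k) • L k with hDdef
  have hZd : ∀ y, HasFDerivAt Z (D y) y := by
    intro y
    exact HasFDerivAt.fun_sum fun k _ => (hsd k y).exp
  have hDapp : ∀ y a, D y (Pi.single a 1) = ∑ l, Real.exp (s y l) * A l a := by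
    intro y a
    simp [hDdef, ContinuousLinearMap.sum_apply, hLsingle]
  have hZinv : ∀ y, HasFDerivAt (fun y => (Z y)⁻¹) (-(Z y ^ 2)⁻¹ • D y) y := by
    intro y
    exact (hasDerivAt_inv (hZne y)).comp_hasFDerivAt y (hZd y)
  have hp : ∀ k y, HasFDerivAt (softmaxP s k)
      (Real.exp (s y k) • (-(Z y ^ 2)⁻¹ • D y) + (Z y)⁻¹ • (Real.exp (s y k) • L k)) y := by
    intro k y
    have hpe : softmaxP s k = fun y => Real.exp (s y k) * (Z y)⁻¹ := by
      funext y
      simp [softmaxP, hZdef, div_eq_mul_inv]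
    rw [hpe]
    exact ((hsd k y).exp).mul (hZinv y)
  have hgradp : ∀ k a, grad (softmaxP s k) x a =
      Real.exp (s x k) * (-(Z x ^ 2)⁻¹ * (∑ l, Real.exp (s x l) * A l a))
        + (Z x)⁻¹ * (Real.exp (s x k) * A k a) := by
    intro k a
    rw [grad, (hp k x).fderiv]
    simp [ContinuousLinearMap.add_apply, ContinuousLinearMap.smul_apply, hLsingle, hDapp,
      smul_eq_mul]
  have hgrads : ∀ k j, grad (fun y => s y k) x j = A k j := by
    intro k j
    rw [grad, (hsd k x).fderiv, hLsingle]
  have hflog : (fun y => Real.log (softmaxP s i y)) = fun y => s y i - Real.log (Z y) := by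
    funext y
    rw [softmaxP, Real.log_div (Real.exp_ne_zero _) (hZne y), Real.log_exp]
  have hfd : ∀ y, HasFDerivAt (fun y => Real.log (softmaxP s i y)) (L i - (Z y)⁻¹ • D y) y := by
    intro y
    rw [hflog]
    exact (hsd i y).sub ((hZd y).log (hZne y))
  have hinner : ∀ j y, fderiv ℝ (fun y => Real.log (softmaxP s i y)) y (Pi.single j 1)
      = A i j - (∑ l, Real.exp (s y l) * A l j) * (Z y)⁻¹ := by
    intro j y
    rw [(hfd y).fderiv]
    simp [ContinuousLinearMap.sub_apply, ContinuousLinearMap.smul_apply, hLsingle, hDapp,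
      smul_eq_mul]
    ring
  have hNd : ∀ j y, HasFDerivAt (fun y => ∑ l, Real.exp (s y l) * A l j)
      (∑ l, A l j • (Real.exp (s y l) • L l)) y := by
    intro j y
    exact HasFDerivAt.fun_sum fun l _ => ((hsd l y).exp).mul_const (A l j)
  ext a j
  have hgd : HasFDerivAt (fun y => A i j - (∑ l, Real.exp (s y l) * A l j) * (Z y)⁻¹)
      (-((∑ l, Real.exp (s x l) * A l j) • (-(Z x ^ 2)⁻¹ • D x)
        + (Z x)⁻¹ • (∑ l, A l j • (Real.exp (s x l) • L l)))) x :=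
    HasFDerivAt.const_sub ((hNd j x).mul (hZinv x)) (A i j)
  have hLHS : hess (fun y => Real.log (softmaxP s i y)) x a j
      = -((∑ l, Real.exp (s x l) * A l j) * (-(Z x ^ 2)⁻¹ * (∑ l, Real.exp (s x l) * A l a))
        + (Z x)⁻¹ * (∑ l, A l j * (Real.exp (s x l) * A l a))) := by
    rw [hess]
    have hfun : (fun y => fderiv ℝ (fun y => Real.log (softmaxP s i y)) y (Pi.single j 1))
        = fun y => A i j - (∑ l, Real.exp (s y l) * A l j) * (Z y)⁻¹ := by
      funext y
      exact hinner j y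
    rw [hfun, hgd.fderiv]
    simp [ContinuousLinearMap.add_apply, ContinuousLinearMap.smul_apply,
      ContinuousLinearMap.sum_apply, hLsingle, hDapp, smul_eq_mul]
  rw [hLHS]
  have hRHS : (-∑ k, Matrix.vecMulVec (grad (softmaxP s k) x) (grad (fun y => s y k) x)) a j
      = -∑ k, (Real.exp (s x k) * (-(Z x ^ 2)⁻¹ * (∑ l, Real.exp (s x l) * A l a))
          + (Z x)⁻¹ * (Real.exp (s x k) * A k a)) * A k j := by
    simp only [Matrix.neg_apply, Matrix.sum_apply, Matrix.vecMulVec_apply]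
    congr 1
    refine Finset.sum_congr rfl fun k _ => ?_
    rw [hgradp, hgrads]
  rw [hRHS]
  congr 1
  simp only [add_mul, Finset.sum_add_distrib]
  congr 1
  · rw [Finset.sum_mul]
    exact Finset.sum_congr rfl fun k _ => by ring
  · rw [Finset.mul_sum]
    exact Finset.sum_congr rfl fun k _ => by ring
end

section
/- Let s : ℝ^n → ℝ^C be affine and p = softmax(s). Define vector fields X_i(x) = ∇ log p_i(x) on ℝ^n. Then for all i, j, the Lie bracket [X_i, X_j](x) = H(log p_i)(x) X_j(x) − H(log p_j)(x) X_i(x) lies in span{X_1(x), …, X_C(x)}. -/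
section aux
variable {n C : ℕ} (A : Matrix (Fin C) (Fin n) ℝ) (b : Fin C → ℝ)

noncomputable def linCLM (k : Fin C) : (Fin n → ℝ) →L[ℝ] ℝ :=
  LinearMap.toContinuousLinearMap ((LinearMap.proj k).comp A.mulVecLin)

lemma linCLM_apply (k : Fin C) (v : Fin n → ℝ) : linCLM A k v = A.mulVec v k := rfl

lemma linCLM_single (k : Fin C) (m : Fin n) : linCLM A k (Pi.single m 1) = A k m := by
  simp [linCLM_apply, Matrix.mulVec, dotProduct, Pi.single_apply]

lemma hasFDerivAt_s (k : Fin C) (x : Fin n → ℝ) :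
    HasFDerivAt (fun y : Fin n → ℝ => (A.mulVec y + b) k) (linCLM A k) x := by
  exact (linCLM A k).hasFDerivAt.add_const (b k)

end aux

section aux2
variable {n C : ℕ} (A : Matrix (Fin C) (Fin n) ℝ) (b : Fin C → ℝ)

lemma Zpos [Nonempty (Fin C)] (x : Fin n → ℝ) :
    0 < ∑ r, Real.exp ((A.mulVec x + b) r) :=
  Finset.sum_pos (fun _ _ => Real.exp_pos _) Finset.univ_nonempty

lemma softmaxP_pos [Nonempty (Fin C)] (k : Fin C) (x : Fin n → ℝ) :
    0 < softmaxP (fun y => A.mulVec y + b) k x :=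
  div_pos (Real.exp_pos _) (Zpos A b x)

lemma logP_eq [Nonempty (Fin C)] (k : Fin C) (x : Fin n → ℝ) :
    Real.log (softmaxP (fun y => A.mulVec y + b) k x)
      = (A.mulVec x + b) k - Real.log (∑ r, Real.exp ((A.mulVec x + b) r)) := by
  rw [softmaxP, Real.log_div (Real.exp_ne_zero _) (ne_of_gt (Zpos A b x)), Real.log_exp]

noncomputable def Dk (k : Fin C) (x : Fin n → ℝ) : (Fin n → ℝ) →L[ℝ] ℝ :=
  linCLM A k - ∑ r, softmaxP (fun y => A.mulVec y + b) r x • linCLM A r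

lemma hasFDerivAt_logP [Nonempty (Fin C)] (k : Fin C) (x : Fin n → ℝ) :
    HasFDerivAt (fun y => Real.log (softmaxP (fun z => A.mulVec z + b) k y)) (Dk A b k x) x := by
  have hZ : HasFDerivAt (fun y => ∑ r, Real.exp ((A.mulVec y + b) r))
      (∑ r, Real.exp ((A.mulVec x + b) r) • linCLM A r) x :=
    HasFDerivAt.fun_sum fun r _ => (hasFDerivAt_s A b r x).exp
  have hlogZ : HasFDerivAt (fun y => Real.log (∑ r, Real.exp ((A.mulVec y + b) r)))
      ((∑ r, Real.exp ((A.mulVec x + b) r))⁻¹ • ∑ r, Real.exp ((A.mulVec x + b) r) • linCLM A r) x :=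
    hZ.log (ne_of_gt (Zpos A b x))
  have h := (hasFDerivAt_s A b k x).sub hlogZ
  have heq : (fun y => (A.mulVec y + b) k - Real.log (∑ r, Real.exp ((A.mulVec y + b) r)))
      = fun y => Real.log (softmaxP (fun z => A.mulVec z + b) k y) := by
    funext y; rw [logP_eq]
  rw [show ((fun y => (A.mulVec y + b) k) - fun y => Real.log (∑ r, Real.exp ((A.mulVec y + b) r))) = _ from heq] at h
  rw [Dk]
  refine h.congr_fderiv ?_
  rw [Finset.smul_sum]
  congr 1
  exact Finset.sum_congr rfl fun r _ => by rw [smul_smul, softmaxP, div_eq_inv_mul]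

end aux2

section aux3
variable {n C : ℕ} (A : Matrix (Fin C) (Fin n) ℝ) (b : Fin C → ℝ)

lemma hasFDerivAt_P [Nonempty (Fin C)] (k : Fin C) (x : Fin n → ℝ) :
    HasFDerivAt (softmaxP (fun z => A.mulVec z + b) k)
      (softmaxP (fun z => A.mulVec z + b) k x • Dk A b k x) x := by
  have h := (hasFDerivAt_logP A b k x).exp
  have heq : (fun y => Real.exp (Real.log (softmaxP (fun z => A.mulVec z + b) k y)))
      = softmaxP (fun z => A.mulVec z + b) k := by
    funext y; exact Real.exp_log (softmaxP_pos A b k y)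
  rw [heq, Real.exp_log (softmaxP_pos A b k x)] at h
  exact h

lemma grad_logP [Nonempty (Fin C)] (k : Fin C) (x : Fin n → ℝ) :
    grad (fun y => Real.log (softmaxP (fun z => A.mulVec z + b) k y)) x
      = fun m => A k m - ∑ r, softmaxP (fun z => A.mulVec z + b) r x * A r m := by
  funext m
  rw [grad, (hasFDerivAt_logP A b k x).fderiv]
  simp only [Dk, ContinuousLinearMap.sub_apply, ContinuousLinearMap.sum_apply,
    ContinuousLinearMap.smul_apply, linCLM_single, smul_eq_mul]

lemma Dk_single [Nonempty (Fin C)] (r : Fin C) (x : Fin n → ℝ) (m : Fin n) :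
    Dk A b r x (Pi.single m 1)
      = grad (fun y => Real.log (softmaxP (fun z => A.mulVec z + b) r y)) x m := by
  rw [grad, (hasFDerivAt_logP A b r x).fderiv]

lemma hess_logP [Nonempty (Fin C)] (k : Fin C) (x : Fin n → ℝ) (m l : Fin n) :
    hess (fun y => Real.log (softmaxP (fun z => A.mulVec z + b) k y)) x m l
      = -∑ r, softmaxP (fun z => A.mulVec z + b) r x
          * grad (fun y => Real.log (softmaxP (fun z => A.mulVec z + b) r y)) x m * A r l := by
  have hinner : (fun y => fderiv ℝ (fun y' => Real.log (softmaxP (fun z => A.mulVec z + b) k y')) y (Pi.single l 1))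
      = fun y => A k l - ∑ r, softmaxP (fun z => A.mulVec z + b) r y * A r l := by
    funext y
    rw [(hasFDerivAt_logP A b k y).fderiv]
    simp only [Dk, ContinuousLinearMap.sub_apply, ContinuousLinearMap.sum_apply,
      ContinuousLinearMap.smul_apply, linCLM_single, smul_eq_mul]
  have hD : HasFDerivAt (fun y => A k l - ∑ r, softmaxP (fun z => A.mulVec z + b) r y * A r l)
      (0 - ∑ r, A r l • (softmaxP (fun z => A.mulVec z + b) r x • Dk A b r x)) x :=
    (hasFDerivAt_const (A k l) x).sub
      (HasFDerivAt.fun_sum fun r _ => (hasFDerivAt_P A b r x).mul_const (A r l))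
  rw [hess, hinner, hD.fderiv]
  simp only [ContinuousLinearMap.sub_apply, ContinuousLinearMap.zero_apply,
    ContinuousLinearMap.sum_apply, ContinuousLinearMap.smul_apply, smul_eq_mul,
    ContinuousLinearMap.neg_apply, Dk_single, zero_sub, neg_inj]
  exact Finset.sum_congr rfl fun r _ => by ring

end aux3

section aux4
variable {n C : ℕ} (A : Matrix (Fin C) (Fin n) ℝ) (b : Fin C → ℝ)

lemma mulVec_hess [Nonempty (Fin C)] (k j : Fin C) (x : Fin n → ℝ) :
    (hess (fun y => Real.log (softmaxP (fun z => A.mulVec z + b) k y)) x).mulVec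
        (grad (fun y => Real.log (softmaxP (fun z => A.mulVec z + b) j y)) x)
      = ∑ r, (-(softmaxP (fun z => A.mulVec z + b) r x *
            ∑ l, A r l * grad (fun y => Real.log (softmaxP (fun z => A.mulVec z + b) j y)) x l)) •
          grad (fun y => Real.log (softmaxP (fun z => A.mulVec z + b) r y)) x := by
  funext m
  simp only [Matrix.mulVec, dotProduct, hess_logP, Finset.sum_apply, Pi.smul_apply,
    smul_eq_mul, neg_mul, mul_neg, Finset.sum_neg_distrib, Finset.sum_mul, Finset.mul_sum,
    neg_inj]
  rw [Finset.sum_comm]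
  exact Finset.sum_congr rfl fun r _ => Finset.sum_congr rfl fun l _ => by ring

end aux4

theorem stmt11 {n C : ℕ} (A : Matrix (Fin C) (Fin n) ℝ) (b : Fin C → ℝ)
    (s : (Fin n → ℝ) → Fin C → ℝ) (hs : ∀ x, s x = A.mulVec x + b)
    (i j : Fin C) (x : Fin n → ℝ) :
    (hess (fun y => Real.log (softmaxP s i y)) x).mulVec
        (grad (fun y => Real.log (softmaxP s j y)) x) -
      (hess (fun y => Real.log (softmaxP s j y)) x).mulVec
        (grad (fun y => Real.log (softmaxP s i y)) x) ∈
      Submodule.span ℝ (Set.range fun k => grad (fun y => Real.log (softmaxP s k y)) x) := by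
  haveI : Nonempty (Fin C) := ⟨i⟩
  have hsf : s = fun z => A.mulVec z + b := funext hs
  subst hsf
  rw [mulVec_hess, mulVec_hess]
  exact Submodule.sub_mem _
    (Submodule.sum_mem _ fun r _ => Submodule.smul_mem _ _ (Submodule.subset_span ⟨r, rfl⟩))
    (Submodule.sum_mem _ fun r _ => Submodule.smul_mem _ _ (Submodule.subset_span ⟨r, rfl⟩))
end
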